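/- Let V be a pre-Hilbert space, let ξ : [0,1] → End(V) be a family of skew-symmetric linear operators, and suppose ψ, φ : [0,1] → V are differentiable curves (with respect to the norm topology) satisfying ψ'(t) = ξ(t)ψ(t) and φ'(t) = ξ(t)φ(t) for all t, with ψ(0) = φ(0). Then ψ(t) = φ(t) for all t ∈ [0,1]. -/

import Mathlib

open scoped InnerProductSpace

/-- Uniqueness of solutions of `ψ' = ξ(t) ψ` for skew-symmetric `ξ(t)` on a
pre-Hilbert space. -/
theorem uniqueness_of_solutions
    {V : Type*} [NormedAddCommGroup V] [InnerProductSpace ℂ V]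
    (ξ : ℝ → V →ₗ[ℂ] V)
    (hskew : ∀ t ∈ Set.Icc (0:ℝ) 1, ∀ x y : V, ⟪ξ t x, y⟫_ℂ = -⟪x, ξ t y⟫_ℂ)
    (ψ φ : ℝ → V)
    (hψ : ∀ t ∈ Set.Icc (0:ℝ) 1, HasDerivAt ψ (ξ t (ψ t)) t)
    (hφ : ∀ t ∈ Set.Icc (0:ℝ) 1, HasDerivAt φ (ξ t (φ t)) t)
    (h0 : ψ 0 = φ 0) :
    ∀ t ∈ Set.Icc (0:ℝ) 1, ψ t = φ t := by
  set δ : ℝ → V := fun t => ψ t - φ t with hδdef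
  have hd : ∀ t ∈ Set.Icc (0:ℝ) 1, HasDerivAt δ (ξ t (δ t)) t := by
    intro t ht
    simpa [hδdef, map_sub] using (hψ t ht).fun_sub (hφ t ht)
  set g : ℝ → ℂ := fun t => ⟪δ t, δ t⟫_ℂ with hgdef
  have hgd : ∀ t ∈ Set.Icc (0:ℝ) 1, HasDerivAt g 0 t := by
    intro t ht
    have h := (hd t ht).inner (𝕜 := ℂ) (hd t ht)
    have hz : ⟪δ t, ξ t (δ t)⟫_ℂ + ⟪ξ t (δ t), δ t⟫_ℂ = 0 := by
      rw [hskew t ht]; ring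
    simpa [hgdef, hz] using h
  have hcont : ContinuousOn g (Set.Icc 0 1) := fun t ht =>
    ((hgd t ht).continuousAt).continuousWithinAt
  have hconst : ∀ t ∈ Set.Icc (0:ℝ) 1, g t = g 0 :=
    constant_of_has_deriv_right_zero hcont (fun t htIco =>
      ((hgd t (Set.mem_Icc_of_Ico htIco)).hasDerivWithinAt))
  intro t ht
  have h1 : g t = 0 := by
    rw [hconst t ht]
    simp [hgdef, hδdef, h0]
  have h2 : δ t = 0 := inner_self_eq_zero.mp h1
  have := sub_eq_zero.mp h2
  simpa [hδdef] using this
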